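/- Let (W,S) be the Coxeter system with S = {s_1, s_2, s_3} and m_{s_1s_2} = 3, m_{s_2s_3} = ∞, m_{s_1s_3} = 2. Then the prescribed linear operators for s_1, s_2, s_3 on V := ℂu_0 ⊕ ⊕_{i≥1}(ℂu_i ⊕ ℂv_i) define a representation of W on V; that is, each operator is an involution, the operators for s_1 and s_2 satisfy ((s_1s_2)-operator)^3 = id, the operators for s_1 and s_3 commute, and hence s ↦ (its operator) extends to a group homomorphism from W to GL(V). -/

import Mathlib

/-- The Coxeter matrix with `S = {s₁, s₂, s₃}` (indexed by `Fin 3`), `m_{s₁s₂} = 3`,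
`m_{s₂s₃} = ∞` (encoded as `0` in Mathlib) and `m_{s₁s₃} = 2`. -/
def sec5Matrix : CoxeterMatrix (Fin 3) where
  M := !![1, 3, 2; 3, 1, 0; 2, 0, 1]
  off_diagonal := by
    intro i i' h
    fin_cases i <;> fin_cases i' <;> simp_all

/-- The Section 5 operators on basis vectors.  The basis of
`V = ℂu₀ ⊕ ⊕_{i ≥ 1} (ℂuᵢ ⊕ ℂvᵢ)` is indexed by `ℕ ⊕ ℕ`, with `Sum.inl i ↦ uᵢ` (`i ≥ 0`) and
`Sum.inr j ↦ v_{j+1}` (`j ≥ 0`).  The formulas are: `s₁·uᵢ = uᵢ`, `s₁·vᵢ = −vᵢ`;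
`s₂·u₀ = u₀`, `s₂·uᵢ = (3vᵢ − uᵢ)/2` and `s₂·vᵢ = (uᵢ + vᵢ)/2` for `i ≥ 1`;
`s₃·u_{2k} = u_{2k+1}`, `s₃·u_{2k+1} = u_{2k}`, `s₃·v_{2k−1} = v_{2k}`, `s₃·v_{2k} = v_{2k−1}`
(which on indices `Sum.inl i`, resp. `v_{j+1} = Sum.inr j`, is
`n ↦ n + 1` for `n` even and `n ↦ n − 1` for `n` odd). -/
noncomputable def sec5Basis (s : Fin 3) (x : ℕ ⊕ ℕ) : (ℕ ⊕ ℕ) →₀ ℂ :=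
  if s = 0 then
    match x with
    | Sum.inl i => Finsupp.single (Sum.inl i) 1
    | Sum.inr j => -Finsupp.single (Sum.inr j) 1
  else if s = 1 then
    match x with
    | Sum.inl 0 => Finsupp.single (Sum.inl 0) 1
    | Sum.inl (i + 1) => ((3 : ℂ) / 2) • Finsupp.single (Sum.inr i) 1 -
        ((1 : ℂ) / 2) • Finsupp.single (Sum.inl (i + 1)) 1
    | Sum.inr j => ((1 : ℂ) / 2) • Finsupp.single (Sum.inl (j + 1)) 1 +
        ((1 : ℂ) / 2) • Finsupp.single (Sum.inr j) 1
  else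
    match x with
    | Sum.inl i => Finsupp.single (Sum.inl (if Even i then i + 1 else i - 1)) 1
    | Sum.inr j => Finsupp.single (Sum.inr (if Even j then j + 1 else j - 1)) 1

/-- The Section 5 operators, as linear endomorphisms of `V = (ℕ ⊕ ℕ) →₀ ℂ`. -/
noncomputable def sec5Act (s : Fin 3) : ((ℕ ⊕ ℕ) →₀ ℂ) →ₗ[ℂ] ((ℕ ⊕ ℕ) →₀ ℂ) :=
  Finsupp.lift _ ℂ _ (sec5Basis s)


lemma sec5Act_single (s : Fin 3) (x : ℕ ⊕ ℕ) :
    sec5Act s (Finsupp.single x 1) = sec5Basis s x := by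
  simp [sec5Act]

lemma act0_inl (i : ℕ) : sec5Act 0 (Finsupp.single (Sum.inl i) 1) =
    Finsupp.single (Sum.inl i) 1 := by simp [sec5Act_single, sec5Basis]
lemma act0_inr (j : ℕ) : sec5Act 0 (Finsupp.single (Sum.inr j) 1) =
    -Finsupp.single (Sum.inr j) 1 := by simp [sec5Act_single, sec5Basis]
lemma act1_inl0 : sec5Act 1 (Finsupp.single (Sum.inl 0) 1) =
    Finsupp.single (Sum.inl 0) 1 := by simp [sec5Act_single, sec5Basis]
lemma act1_inls (i : ℕ) : sec5Act 1 (Finsupp.single (Sum.inl (i + 1)) 1) =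
    ((3 : ℂ) / 2) • Finsupp.single (Sum.inr i) 1 -
      ((1 : ℂ) / 2) • Finsupp.single (Sum.inl (i + 1)) 1 := by simp [sec5Act_single, sec5Basis]
lemma act1_inr (j : ℕ) : sec5Act 1 (Finsupp.single (Sum.inr j) 1) =
    ((1 : ℂ) / 2) • Finsupp.single (Sum.inl (j + 1)) 1 +
      ((1 : ℂ) / 2) • Finsupp.single (Sum.inr j) 1 := by simp [sec5Act_single, sec5Basis]
lemma act2_inl (i : ℕ) : sec5Act 2 (Finsupp.single (Sum.inl i) 1) =
    Finsupp.single (Sum.inl (if Even i then i + 1 else i - 1)) 1 := by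
  simp [sec5Act_single, sec5Basis]
lemma act2_inr (j : ℕ) : sec5Act 2 (Finsupp.single (Sum.inr j) 1) =
    Finsupp.single (Sum.inr (if Even j then j + 1 else j - 1)) 1 := by
  simp [sec5Act_single, sec5Basis]

lemma inv0 : sec5Act 0 * sec5Act 0 = 1 := by
  refine Finsupp.lhom_ext' fun x => LinearMap.ext_ring ?_
  obtain (i | j) := x <;>
    simp [Module.End.mul_apply, act0_inl, act0_inr]

lemma inv1 : sec5Act 1 * sec5Act 1 = 1 := by
  refine Finsupp.lhom_ext' fun x => LinearMap.ext_ring ?_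
  obtain (_ | i) | j := x <;>
    simp only [LinearMap.comp_apply, Finsupp.lsingle_apply, Module.End.mul_apply,
      Module.End.one_apply, map_add, map_sub, map_smul, act1_inl0, act1_inls, act1_inr] <;>
    module

lemma inv2 : sec5Act 2 * sec5Act 2 = 1 := by
  refine Finsupp.lhom_ext' fun x => LinearMap.ext_ring ?_
  obtain (i | j) := x
  · rcases Nat.even_or_odd i with h | h
    · simp [Module.End.mul_apply, act2_inl, h, Nat.even_add_one]
    · simp [Module.End.mul_apply, act2_inl, Nat.not_even_iff_odd.mpr h,
        Nat.Odd.sub_odd h odd_one, Nat.sub_add_cancel h.pos]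
  · rcases Nat.even_or_odd j with h | h
    · simp [Module.End.mul_apply, act2_inr, h, Nat.even_add_one]
    · simp [Module.End.mul_apply, act2_inr, Nat.not_even_iff_odd.mpr h,
        Nat.Odd.sub_odd h odd_one, Nat.sub_add_cancel h.pos]

lemma braid01 : (sec5Act 0 * sec5Act 1) ^ 3 = 1 := by
  refine Finsupp.lhom_ext' fun x => LinearMap.ext_ring ?_
  obtain (_ | i) | j := x <;>
    simp only [pow_succ, pow_zero, one_mul, LinearMap.comp_apply, Finsupp.lsingle_apply,
      Module.End.mul_apply, Module.End.one_apply, map_add, map_sub, map_smul, map_neg,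
      act0_inl, act0_inr, act1_inl0, act1_inls, act1_inr, smul_neg] <;>
    module

lemma braid10 : (sec5Act 1 * sec5Act 0) ^ 3 = 1 := by
  refine Finsupp.lhom_ext' fun x => LinearMap.ext_ring ?_
  obtain (_ | i) | j := x <;>
    simp only [pow_succ, pow_zero, one_mul, LinearMap.comp_apply, Finsupp.lsingle_apply,
      Module.End.mul_apply, Module.End.one_apply, map_add, map_sub, map_smul, map_neg,
      act0_inl, act0_inr, act1_inl0, act1_inls, act1_inr, smul_neg] <;>
    module

lemma comm02 : sec5Act 0 * sec5Act 2 = sec5Act 2 * sec5Act 0 := by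
  refine Finsupp.lhom_ext' fun x => LinearMap.ext_ring ?_
  obtain (i | j) := x <;>
    simp [Module.End.mul_apply, act0_inl, act0_inr, act2_inl, act2_inr]

lemma sq02 : (sec5Act 0 * sec5Act 2) ^ 2 = 1 := by
  rw [sq, mul_assoc, ← mul_assoc (sec5Act 2), ← comm02, mul_assoc, ← mul_assoc,
    inv0, inv2, one_mul]

lemma sq20 : (sec5Act 2 * sec5Act 0) ^ 2 = 1 := by
  rw [sq, mul_assoc, ← mul_assoc (sec5Act 0), comm02, mul_assoc, ← mul_assoc,
    inv2, inv0, one_mul]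

lemma sec5Liftable : sec5Matrix.IsLiftable sec5Act := by
  intro i i'
  fin_cases i <;> fin_cases i'
  · show (sec5Act 0 * sec5Act 0) ^ 1 = 1; rw [pow_one]; exact inv0
  · show (sec5Act 0 * sec5Act 1) ^ 3 = 1; exact braid01
  · show (sec5Act 0 * sec5Act 2) ^ 2 = 1; exact sq02
  · show (sec5Act 1 * sec5Act 0) ^ 3 = 1; exact braid10
  · show (sec5Act 1 * sec5Act 1) ^ 1 = 1; rw [pow_one]; exact inv1
  · show (sec5Act 1 * sec5Act 2) ^ 0 = 1; exact pow_zero _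
  · show (sec5Act 2 * sec5Act 0) ^ 2 = 1; exact sq20
  · show (sec5Act 2 * sec5Act 1) ^ 0 = 1; exact pow_zero _
  · show (sec5Act 2 * sec5Act 2) ^ 1 = 1; rw [pow_one]; exact inv2

/-- the Section 5 operators define a representation of the Coxeter group `W` of
the system with `m_{s₁s₂} = 3`, `m_{s₂s₃} = ∞`, `m_{s₁s₃} = 2` on
`V = ℂu₀ ⊕ ⊕_{i ≥ 1}(ℂuᵢ ⊕ ℂvᵢ)`: each operator is an involution, the operators of `s₁, s₂`
satisfy `((s₁s₂)-operator)³ = id`, the operators of `s₁, s₃` commute, and hence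
`s ↦ (its operator)` extends to a group homomorphism from `W` to `GL(V)`, i.e. to a
representation of `W`. -/
theorem statement10 {W : Type*} [Group W] (cs : CoxeterSystem sec5Matrix W) :
    (∀ s : Fin 3, sec5Act s * sec5Act s = 1) ∧
    (sec5Act 0 * sec5Act 1) ^ 3 = 1 ∧
    sec5Act 0 * sec5Act 2 = sec5Act 2 * sec5Act 0 ∧
    ∃ ρ : Representation ℂ W ((ℕ ⊕ ℕ) →₀ ℂ), ∀ s : Fin 3, ρ (cs.simple s) = sec5Act s := by
  refine ⟨fun s => by fin_cases s; exacts [inv0, inv1, inv2], braid01, comm02, ?_⟩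
  exact ⟨cs.lift ⟨sec5Act, sec5Liftable⟩, fun s => cs.lift_apply_simple sec5Liftable s⟩
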